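/- arXiv:2302.09875 — 3 statements merged into one kernel-verified Lean document; each statement's English description precedes it below -/
import Mathlib

section
/- Let A, C ∈ ℝ^{n×n} with A invertible and C symmetric positive definite, η ∈ ℝ. Every eigenvalue of the block matrix N = [[-C, -A], [Aᵀ, 0]] has nonpositive real part; moreover no eigenvalue is purely imaginary, so all eigenvalues have strictly negative real part (N is Hurwitz). -/
open Matrix

lemma re_quad {n : ℕ} (C : Matrix (Fin n) (Fin n) ℝ) (x : Fin n → ℂ) :
    (star x ⬝ᵥ ((C.map (Complex.ofReal : ℝ → ℂ)) *ᵥ x)).re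
      = (fun i => (x i).re) ⬝ᵥ (C *ᵥ fun i => (x i).re)
        + (fun i => (x i).im) ⬝ᵥ (C *ᵥ fun i => (x i).im) := by
  simp only [dotProduct, mulVec, map_apply, Pi.star_apply, Complex.re_sum, Complex.mul_re,
    Complex.mul_im, Complex.im_sum, RCLike.star_def, Complex.conj_re, Complex.conj_im,
    Complex.ofReal_re, Complex.ofReal_im, Finset.mul_sum, Finset.sum_mul,
    ← Finset.sum_add_distrib, ← Finset.sum_sub_distrib]
  exact Finset.sum_congr rfl fun i _ => Finset.sum_congr rfl fun j _ => by ring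

theorem stmt8 {n : ℕ} (A C : Matrix (Fin n) (Fin n) ℝ) (hA : IsUnit A) (hC : C.PosDef)
    (N : Matrix (Fin n ⊕ Fin n) (Fin n ⊕ Fin n) ℝ)
    (hN : N = Matrix.fromBlocks (-C) (-A) Aᵀ 0) :
    ∀ μ : ℂ,
      Module.End.HasEigenvalue (Matrix.toLin' (N.map (Complex.ofReal : ℝ → ℂ))) μ →
        μ.re ≤ 0 ∧ μ.re ≠ 0 := by
  intro μ hμ
  obtain ⟨v, hv⟩ := hμ.exists_hasEigenvector
  have hv0 : v ≠ 0 := hv.2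
  set c : ℝ → ℂ := Complex.ofReal with hc
  set M := N.map c with hM
  have hMv : M *ᵥ v = μ • v := by
    have := hv.apply_eq_smul
    simpa [Matrix.toLin'_apply] using this
  set x : Fin n → ℂ := v ∘ Sum.inl with hx
  set y : Fin n → ℂ := v ∘ Sum.inr with hy
  have hvel : v = Sum.elim x y := (Sum.elim_comp_inl_inr v).symm
  have hMblocks : M = fromBlocks (-(C.map c)) (-(A.map c)) ((A.map c)ᵀ) 0 := by
    subst hN
    ext (i | i) (j | j) <;> simp [hM, hc, fromBlocks, map_apply]
  have h1 : (-(C.map c)) *ᵥ x + (-(A.map c)) *ᵥ y = μ • x := by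
    funext i
    have := congrFun hMv (Sum.inl i)
    rw [hMblocks, hvel] at this
    simpa [fromBlocks_mulVec] using this
  have h2 : (A.map c)ᵀ *ᵥ x = μ • y := by
    funext i
    have := congrFun hMv (Sum.inr i)
    rw [hMblocks, hvel] at this
    simpa [fromBlocks_mulVec] using this
  set s : ℂ := star x ⬝ᵥ ((C.map c) *ᵥ x) with hs
  set t : ℂ := star x ⬝ᵥ ((A.map c) *ᵥ y) with ht
  have E1 : -s - t = μ * (star x ⬝ᵥ x) := by
    have := congrArg (fun w => star x ⬝ᵥ w) h1
    simpa [neg_mulVec, dotProduct_add, dotProduct_neg, dotProduct_smul, smul_eq_mul,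
      sub_eq_add_neg] using this
  have hconj : star y ⬝ᵥ ((A.map c)ᵀ *ᵥ x) = star t := by
    rw [ht]
    simp only [dotProduct, mulVec, transpose_apply, map_apply, Pi.star_apply, Finset.mul_sum,
      star_sum, star_mul', RCLike.star_def, Complex.conj_conj, Complex.conj_ofReal]
    rw [Finset.sum_comm]
    refine Finset.sum_congr rfl fun i _ => Finset.sum_congr rfl fun j _ => ?_
    simp only [hc, Complex.conj_ofReal]
    ring
  have E2 : star t = μ * (star y ⬝ᵥ y) := by
    rw [← hconj]
    have := congrArg (fun w => star y ⬝ᵥ w) h2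
    simpa [dotProduct_smul, smul_eq_mul] using this
  -- real parts of self dot products
  have hrx : star x ⬝ᵥ x = ((∑ i, Complex.normSq (x i) : ℝ) : ℂ) := by
    push_cast
    simp [dotProduct, Complex.normSq_eq_conj_mul_self]
  have hry : star y ⬝ᵥ y = ((∑ i, Complex.normSq (y i) : ℝ) : ℂ) := by
    push_cast
    simp [dotProduct, Complex.normSq_eq_conj_mul_self]
  set R : ℝ := (∑ i, Complex.normSq (x i)) + (∑ i, Complex.normSq (y i)) with hR
  have key : μ.re * R = -(s.re) := by
    have r1 := congrArg Complex.re E1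
    have r2 := congrArg Complex.re E2
    rw [hrx] at r1
    rw [hry] at r2
    simp only [Complex.sub_re, Complex.neg_re, Complex.mul_re, Complex.ofReal_re,
      Complex.ofReal_im, mul_zero, sub_zero, Complex.conj_re, RCLike.star_def] at r1 r2
    rw [hR]
    linarith
  have hs_nonneg : 0 ≤ s.re := by
    rw [hs, re_quad]
    have h1 := hC.posSemidef.dotProduct_mulVec_nonneg (fun i => (x i).re)
    have h2 := hC.posSemidef.dotProduct_mulVec_nonneg (fun i => (x i).im)
    simp only [star_trivial] at h1 h2
    linarith
  have hRpos : 0 < R := by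
    rw [hR]
    have hxy : x ≠ 0 ∨ y ≠ 0 := by
      by_contra h
      push_neg at h
      apply hv0
      rw [hvel, h.1, h.2]
      funext i
      cases i <;> rfl
    have hnx : 0 ≤ ∑ i, Complex.normSq (x i) :=
      Finset.sum_nonneg fun i _ => Complex.normSq_nonneg _
    have hny : 0 ≤ ∑ i, Complex.normSq (y i) :=
      Finset.sum_nonneg fun i _ => Complex.normSq_nonneg _
    rcases hxy with h | h
    · obtain ⟨i, hi⟩ := Function.ne_iff.mp h
      have : 0 < ∑ i, Complex.normSq (x i) :=
        Finset.sum_pos' (fun i _ => Complex.normSq_nonneg _)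
          ⟨i, Finset.mem_univ i, Complex.normSq_pos.2 hi⟩
      linarith
    · obtain ⟨i, hi⟩ := Function.ne_iff.mp h
      have : 0 < ∑ i, Complex.normSq (y i) :=
        Finset.sum_pos' (fun i _ => Complex.normSq_nonneg _)
          ⟨i, Finset.mem_univ i, Complex.normSq_pos.2 hi⟩
      linarith
  constructor
  · by_contra hpos
    push_neg at hpos
    nlinarith [key, hs_nonneg, hRpos]
  · intro hre0
    rw [hre0, zero_mul] at key
    have hsre : s.re = 0 := by linarith
    -- s.re = 0 forces x = 0 by positive definiteness of C
    have hx0 : x = 0 := by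
      rw [hs, re_quad] at hsre
      have h1 := hC.posSemidef.dotProduct_mulVec_nonneg (fun i => (x i).re)
      have h2 := hC.posSemidef.dotProduct_mulVec_nonneg (fun i => (x i).im)
      simp only [star_trivial] at h1 h2
      have ha : (fun i => (x i).re) = 0 := by
        by_contra h
        have := hC.dotProduct_mulVec_pos (x := fun i => (x i).re) h
        simp only [star_trivial] at this
        linarith
      have hb : (fun i => (x i).im) = 0 := by
        by_contra h
        have := hC.dotProduct_mulVec_pos (x := fun i => (x i).im) h
        simp only [star_trivial] at this
        linarith
      funext i
      have hai := congrFun ha i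
      have hbi := congrFun hb i
      simp only [Pi.zero_apply] at hai hbi ⊢
      exact Complex.ext hai hbi
    -- then A *ᵥ y = 0, so y = 0
    have hy0 : y = 0 := by
      have hAy : (A.map c) *ᵥ y = 0 := by
        have := h1
        rw [hx0] at this
        simpa [neg_mulVec] using this.symm
      have hAunit : IsUnit (A.map c) := by
        have := hA.map (Complex.ofRealHom.mapMatrix (m := Fin n))
        simp only [RingHom.mapMatrix_apply] at this
        exact this
      have hinj := Matrix.mulVec_injective_iff_isUnit.mpr hAunit
      have := hinj (a₁ := y) (a₂ := 0) (by simpa using hAy)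
      exact this
    apply hv0
    rw [hvel, hx0, hy0]
    funext i
    cases i <;> rfl
end

section
/- Let A, C ∈ ℝ^{n×n} with A invertible and C symmetric positive definite, and η ∈ ℝ. Then every solution of the linear system λ̇ₜ = (-C + ηA)λₜ - Axₜ, ẋₜ = (Aᵀ + η²A - ηC)λₜ - ηAxₜ converges to the origin as t → ∞, for any initial condition in ℝⁿ × ℝⁿ. -/
open Filter Matrix

local notation "⟪" x ", " y "⟫" => @inner ℝ _ _ x y

noncomputable def Tm {n : ℕ} (M : Matrix (Fin n) (Fin n) ℝ) :
    EuclideanSpace ℝ (Fin n) →L[ℝ] EuclideanSpace ℝ (Fin n) :=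
  Matrix.toEuclideanCLM (𝕜 := ℝ) M

lemma Tm_apply {n : ℕ} (M : Matrix (Fin n) (Fin n) ℝ) (v : EuclideanSpace ℝ (Fin n)) :
    Tm M v = WithLp.toLp 2 (M.mulVec v) := rfl

lemma inner_eq_dot {n : ℕ} (v w : EuclideanSpace ℝ (Fin n)) :
    ⟪v, w⟫ = dotProduct (v : Fin n → ℝ) w := by
  simp [PiLp.inner_apply, RCLike.inner_apply, dotProduct]
  exact Finset.sum_congr rfl fun _ _ => mul_comm _ _

lemma inner_Tm {n : ℕ} (M : Matrix (Fin n) (Fin n) ℝ) (v w : EuclideanSpace ℝ (Fin n)) :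
    ⟪v, Tm M w⟫ = ⟪Tm Mᵀ v, w⟫ := by
  rw [inner_eq_dot, inner_eq_dot]
  show v ⬝ᵥ (M *ᵥ w) = (Mᵀ *ᵥ v) ⬝ᵥ w
  rw [dotProduct_mulVec, mulVec_transpose]

lemma lower_bound {n : ℕ} {M : Matrix (Fin n) (Fin n) ℝ} (hM : IsUnit M) :
    ∃ σ > 0, ∀ v : EuclideanSpace ℝ (Fin n), σ * ‖v‖ ≤ ‖Tm M v‖ := by
  refine ⟨(‖Tm M⁻¹‖ + 1)⁻¹, by positivity, fun v => ?_⟩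
  have h1 : ‖v‖ ≤ ‖Tm M⁻¹‖ * ‖Tm M v‖ := by
    have h2 : Tm M⁻¹ (Tm M v) = v := by
      rw [Tm_apply, Tm_apply]
      show WithLp.toLp 2 (M⁻¹ *ᵥ (M *ᵥ v)) = v
      rw [mulVec_mulVec, Matrix.nonsing_inv_mul _ ((Matrix.isUnit_iff_isUnit_det _).1 hM),
        one_mulVec]
    calc ‖v‖ = ‖Tm M⁻¹ (Tm M v)‖ := by rw [h2]
    _ ≤ ‖Tm M⁻¹‖ * ‖Tm M v‖ := (Tm M⁻¹).le_opNorm _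
  rw [inv_mul_le_iff₀ (by positivity)]
  nlinarith [norm_nonneg (Tm M v), norm_nonneg v, norm_nonneg (Tm M⁻¹)]

open scoped MatrixOrder in
lemma coercive {n : ℕ} {C : Matrix (Fin n) (Fin n) ℝ} (hC : C.PosDef) :
    ∃ c > 0, ∀ v : EuclideanSpace ℝ (Fin n), c * ‖v‖ ^ 2 ≤ ⟪v, Tm C v⟫ := by
  set S := CFC.sqrt C with hSdef
  have hSS : S * S = C := CFC.sqrt_mul_sqrt_self C (Matrix.nonneg_iff_posSemidef.2 hC.posSemidef)
  have hSsym : Sᵀ = S := by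
    have := (Matrix.nonneg_iff_posSemidef.1 (CFC.sqrt_nonneg C)).isHermitian
    simpa [Matrix.IsHermitian, Matrix.conjTranspose_eq_transpose_of_trivial] using this
  have hSunit : IsUnit S := by
    rw [Matrix.isUnit_iff_isUnit_det]
    have h : IsUnit (S.det * S.det) := by
      rw [← Matrix.det_mul, hSS]; exact (Matrix.isUnit_iff_isUnit_det _).1 hC.isUnit
    exact isUnit_of_mul_isUnit_left h
  obtain ⟨σ, hσ, hlow⟩ := lower_bound hSunit
  refine ⟨σ ^ 2, by positivity, fun v => ?_⟩
  have h1 : ⟪v, Tm C v⟫ = ⟪Tm S v, Tm S v⟫ := by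
    have h2 : Tm C v = Tm S (Tm S v) := by
      rw [Tm_apply, Tm_apply, Tm_apply]
      show WithLp.toLp 2 (C *ᵥ v) = WithLp.toLp 2 (S *ᵥ (S *ᵥ v))
      rw [mulVec_mulVec, hSS]
    rw [h2, inner_Tm, hSsym]
  rw [h1, real_inner_self_eq_norm_sq]
  have h3 := hlow v
  nlinarith [mul_le_mul h3 h3 (by positivity : (0:ℝ) ≤ σ * ‖v‖) (norm_nonneg (Tm S v))]

set_option maxHeartbeats 1000000 in
lemma Vd_eq {n : ℕ} (A C : Matrix (Fin n) (Fin n) ℝ) (ε : ℝ)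
    (a b : EuclideanSpace ℝ (Fin n)) :
    (⟪a, -(Tm C a) - Tm A b⟫ + ⟪-(Tm C a) - Tm A b, a⟫)
      + (⟪b, Tm Aᵀ a⟫ + ⟪Tm Aᵀ a, b⟫)
      + (2 * ε) * (⟪b, Tm Aᵀ (-(Tm C a) - Tm A b)⟫ + ⟪Tm Aᵀ a, Tm Aᵀ a⟫)
    = -2 * ⟪a, Tm C a⟫ + 2 * ε * ‖Tm Aᵀ a‖ ^ 2 - 2 * ε * ⟪Tm A b, Tm C a⟫
      - 2 * ε * ‖Tm A b‖ ^ 2 := by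
  have e1 : ⟪a, -(Tm C a) - Tm A b⟫ = -⟪a, Tm C a⟫ - ⟪a, Tm A b⟫ := by
    rw [inner_sub_right, inner_neg_right]
  have e2 : ⟪-(Tm C a) - Tm A b, a⟫ = -⟪a, Tm C a⟫ - ⟪a, Tm A b⟫ := by
    rw [real_inner_comm, e1]
  have e3 : ⟪b, Tm Aᵀ a⟫ = ⟪Tm A b, a⟫ := by rw [inner_Tm, transpose_transpose]
  have e4 : ⟪Tm Aᵀ a, b⟫ = ⟪Tm A b, a⟫ := by rw [real_inner_comm, e3]
  have e5 : ⟪b, Tm Aᵀ (-(Tm C a) - Tm A b)⟫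
      = -⟪Tm A b, Tm C a⟫ - ⟪Tm A b, Tm A b⟫ := by
    rw [inner_Tm, transpose_transpose, inner_sub_right, inner_neg_right]
  have e6 : ⟪a, Tm A b⟫ = ⟪Tm A b, a⟫ := real_inner_comm _ _
  have f6 : ⟪Tm Aᵀ a, Tm Aᵀ a⟫ = ‖Tm Aᵀ a‖ ^ 2 := real_inner_self_eq_norm_sq _
  have f7 : ⟪Tm A b, Tm A b⟫ = ‖Tm A b‖ ^ 2 := real_inner_self_eq_norm_sq _
  rw [e1, e2, e3, e4, e5, e6, f6, f7]
  ring

lemma key_scalar (c₀ σ KA KC ε ic iuC na nb nu nY : ℝ)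
    (hσ : 0 < σ) (hε : 0 < ε)
    (hε1 : ε * (2 * KA ^ 2 + KC ^ 2) ≤ c₀)
    (hna : 0 ≤ na) (hnb : 0 ≤ nb) (hnu : 0 ≤ nu) (hnY : 0 ≤ nY)
    (hKA : 0 ≤ KA)
    (f1 : c₀ * na ^ 2 ≤ ic) (f2 : nY ≤ KA * na) (f4 : σ * nb ≤ nu)
    (f5 : |iuC| ≤ nu * (KC * na)) :
    (-2 * ic + 2 * ε * nY ^ 2 - 2 * ε * iuC - 2 * ε * nu ^ 2)
      + min c₀ (ε * σ ^ 2) * (na ^ 2 + nb ^ 2) ≤ 0 := by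
  have hm1 : min c₀ (ε * σ ^ 2) ≤ c₀ := min_le_left _ _
  have hm2 : min c₀ (ε * σ ^ 2) ≤ ε * σ ^ 2 := min_le_right _ _
  have s1 : 2 * ε * nY ^ 2 ≤ 2 * ε * (KA ^ 2 * na ^ 2) := by
    nlinarith [mul_le_mul f2 f2 hnY (by positivity : (0:ℝ) ≤ KA * na)]
  have s2 : -(2 * ε * iuC) ≤ 2 * ε * (nu * (KC * na)) := by
    have h := (abs_le.1 f5).1
    nlinarith
  have s3 : 2 * ε * (nu * (KC * na)) ≤ ε * nu ^ 2 + ε * (KC ^ 2 * na ^ 2) := by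
    nlinarith [sq_nonneg (nu - KC * na)]
  have s4 : ε * (σ ^ 2 * nb ^ 2) ≤ ε * nu ^ 2 := by
    nlinarith [mul_le_mul f4 f4 (by positivity : (0:ℝ) ≤ σ * nb) hnu]
  have s5 : ε * (2 * KA ^ 2 + KC ^ 2) * na ^ 2 ≤ c₀ * na ^ 2 :=
    mul_le_mul_of_nonneg_right hε1 (sq_nonneg _)
  have s6 : min c₀ (ε * σ ^ 2) * na ^ 2 ≤ c₀ * na ^ 2 :=
    mul_le_mul_of_nonneg_right hm1 (sq_nonneg _)
  have s7 : min c₀ (ε * σ ^ 2) * nb ^ 2 ≤ ε * (σ ^ 2 * nb ^ 2) := by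
    have := mul_le_mul_of_nonneg_right hm2 (sq_nonneg nb)
    linarith [this]
  nlinarith [s1, s2, s3, s4, s5, s6, s7, f1]

set_option maxHeartbeats 2000000 in
theorem stmt11 {n : ℕ} (A C : Matrix (Fin n) (Fin n) ℝ) (hA : IsUnit A) (hC : C.PosDef)
    (η : ℝ) (lam x : ℝ → EuclideanSpace ℝ (Fin n))
    (hlam : ∀ t : ℝ, 0 ≤ t → HasDerivAt lam
      (WithLp.toLp 2 ((-C + η • A).mulVec (lam t) - A.mulVec (x t)) : EuclideanSpace ℝ (Fin n)) t)
    (hx : ∀ t : ℝ, 0 ≤ t → HasDerivAt x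
      (WithLp.toLp 2 ((Aᵀ + η ^ 2 • A - η • C).mulVec (lam t) - η • A.mulVec (x t)) :
        EuclideanSpace ℝ (Fin n)) t) :
    Tendsto (fun t => (lam t, x t)) atTop (nhds (0, 0)) := by
  classical
  set y : ℝ → EuclideanSpace ℝ (Fin n) := fun t => x t - η • lam t with hydef
  set L : ℝ → EuclideanSpace ℝ (Fin n) := fun t => -(Tm C (lam t)) - Tm A (y t) with hLdef
  set Y : ℝ → EuclideanSpace ℝ (Fin n) := fun t => Tm Aᵀ (lam t) with hYdef
  have hld : ∀ t : ℝ, 0 ≤ t → HasDerivAt lam (L t) t := by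
    intro t ht
    have h := hlam t ht
    have he : (WithLp.toLp 2 ((-C + η • A).mulVec (lam t) - A.mulVec (x t)) : EuclideanSpace ℝ (Fin n))
        = L t := by
      apply WithLp.ofLp_injective
      show ((-C + η • A) *ᵥ (lam t) - A *ᵥ (x t) : Fin n → ℝ)
          = -(C *ᵥ lam t) - A *ᵥ ((x t : Fin n → ℝ) - η • (lam t : Fin n → ℝ))
      rw [add_mulVec, neg_mulVec, smul_mulVec, mulVec_sub, mulVec_smul]
      module
    rwa [he] at h
  have hyd : ∀ t : ℝ, 0 ≤ t → HasDerivAt y (Y t) t := by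
    intro t ht
    have h := (hx t ht).sub ((hlam t ht).const_smul η)
    have he : ((WithLp.toLp 2 ((Aᵀ + η ^ 2 • A - η • C).mulVec (lam t) - η • A.mulVec (x t))
          : EuclideanSpace ℝ (Fin n))
        - η • (WithLp.toLp 2 ((-C + η • A).mulVec (lam t) - A.mulVec (x t)) : EuclideanSpace ℝ (Fin n)))
        = Y t := by
      apply WithLp.ofLp_injective
      show (((Aᵀ + η ^ 2 • A - η • C) *ᵥ (lam t) - η • (A *ᵥ (x t)) : Fin n → ℝ)
          - η • ((-C + η • A) *ᵥ (lam t) - A *ᵥ (x t) : Fin n → ℝ))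
          = Aᵀ *ᵥ (lam t)
      rw [add_mulVec, sub_mulVec, add_mulVec, neg_mulVec, smul_mulVec,
        smul_mulVec, smul_mulVec]
      module
    rwa [he] at h
  -- constants
  obtain ⟨c₀, hc₀, hcoer⟩ := coercive hC
  obtain ⟨σ, hσ, hlowA⟩ := lower_bound hA
  have hKA : (0:ℝ) ≤ ‖Tm Aᵀ‖ := norm_nonneg _
  have hKC : (0:ℝ) ≤ ‖Tm C‖ := norm_nonneg _
  set ε : ℝ := min (c₀ / (2 * ‖Tm Aᵀ‖ ^ 2 + ‖Tm C‖ ^ 2 + 1)) (1 / (2 * (‖Tm Aᵀ‖ + 1)))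
    with hεdef
  have hε : 0 < ε := lt_min (by positivity) (by positivity)
  have hε1 : ε * (2 * ‖Tm Aᵀ‖ ^ 2 + ‖Tm C‖ ^ 2) ≤ c₀ := by
    have h1 : ε ≤ c₀ / (2 * ‖Tm Aᵀ‖ ^ 2 + ‖Tm C‖ ^ 2 + 1) := min_le_left _ _
    rw [le_div_iff₀ (by positivity)] at h1
    nlinarith
  have hε2 : 2 * ε * ‖Tm Aᵀ‖ ≤ 1 := by
    have h1 : ε ≤ 1 / (2 * (‖Tm Aᵀ‖ + 1)) := min_le_right _ _
    rw [le_div_iff₀ (by positivity)] at h1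
    nlinarith
  set m : ℝ := min c₀ (ε * σ ^ 2) with hmdef
  have hm : 0 < m := lt_min hc₀ (by positivity)
  set δ : ℝ := 2 * m / 3 with hδdef
  have hδ : 0 < δ := by positivity
  -- Lyapunov function
  set V : ℝ → ℝ := fun t => ⟪lam t, lam t⟫ + ⟪y t, y t⟫ + (2 * ε) * ⟪y t, Y t⟫ with hVdef
  set Vd : ℝ → ℝ := fun t =>
    (⟪lam t, L t⟫ + ⟪L t, lam t⟫) + (⟪y t, Y t⟫ + ⟪Y t, y t⟫)
      + (2 * ε) * (⟪y t, Tm Aᵀ (L t)⟫ + ⟪Y t, Y t⟫) with hVddef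
  have hVder : ∀ t : ℝ, 0 ≤ t → HasDerivAt V (Vd t) t := by
    intro t ht
    have h1 := (hld t ht).inner ℝ (hld t ht)
    have h2 := (hyd t ht).inner ℝ (hyd t ht)
    have h3 : HasDerivAt (fun s => Tm Aᵀ (lam s)) (Tm Aᵀ (L t)) t :=
      ((Tm Aᵀ).hasFDerivAt).comp_hasDerivAt t (hld t ht)
    have h4 := ((hyd t ht).inner ℝ h3).const_mul (2 * ε)
    have h5 := (h1.add h2).add h4
    convert h5 using 1
    all_goals rfl
  -- bounds on V
  have hcb : ∀ t : ℝ, (2 * ε) * |⟪y t, Y t⟫| ≤ ‖y t‖ * ‖lam t‖ := by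
    intro t
    have h1 : |⟪y t, Y t⟫| ≤ ‖y t‖ * (‖Tm Aᵀ‖ * ‖lam t‖) := by
      calc |⟪y t, Y t⟫| ≤ ‖y t‖ * ‖Y t‖ := abs_real_inner_le_norm _ _
      _ ≤ ‖y t‖ * (‖Tm Aᵀ‖ * ‖lam t‖) :=
        mul_le_mul_of_nonneg_left ((Tm Aᵀ).le_opNorm _) (norm_nonneg _)
    calc (2 * ε) * |⟪y t, Y t⟫| ≤ (2 * ε) * (‖y t‖ * (‖Tm Aᵀ‖ * ‖lam t‖)) :=
      mul_le_mul_of_nonneg_left h1 (by positivity)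
    _ = (2 * ε * ‖Tm Aᵀ‖) * (‖y t‖ * ‖lam t‖) := by ring
    _ ≤ 1 * (‖y t‖ * ‖lam t‖) :=
      mul_le_mul_of_nonneg_right hε2 (by positivity)
    _ = ‖y t‖ * ‖lam t‖ := one_mul _
  have hVlow : ∀ t : ℝ, (1 / 2) * (‖lam t‖ ^ 2 + ‖y t‖ ^ 2) ≤ V t := by
    intro t
    have h1 := hcb t
    have h3 : (2 * ε) * (-|⟪y t, Y t⟫|) ≤ (2 * ε) * ⟪y t, Y t⟫ :=
      mul_le_mul_of_nonneg_left (neg_abs_le _) (by positivity)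
    simp only [hVdef, real_inner_self_eq_norm_sq]
    nlinarith [sq_nonneg (‖lam t‖ - ‖y t‖)]
  have hVhigh : ∀ t : ℝ, V t ≤ (3 / 2) * (‖lam t‖ ^ 2 + ‖y t‖ ^ 2) := by
    intro t
    have h1 := hcb t
    have h3 : (2 * ε) * ⟪y t, Y t⟫ ≤ (2 * ε) * |⟪y t, Y t⟫| :=
      mul_le_mul_of_nonneg_left (le_abs_self _) (by positivity)
    simp only [hVdef, real_inner_self_eq_norm_sq]
    nlinarith [sq_nonneg (‖lam t‖ - ‖y t‖)]
  -- key differential inequality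
  have hkey : ∀ t : ℝ, Vd t + δ * V t ≤ 0 := by
    intro t
    have hVdt : Vd t = -2 * ⟪lam t, Tm C (lam t)⟫ + 2 * ε * ‖Tm Aᵀ (lam t)‖ ^ 2
        - 2 * ε * ⟪Tm A (y t), Tm C (lam t)⟫ - 2 * ε * ‖Tm A (y t)‖ ^ 2 := by
      simp only [hVddef, hYdef, hLdef]
      exact Vd_eq A C ε (lam t) (y t)
    have f5 : |⟪Tm A (y t), Tm C (lam t)⟫| ≤ ‖Tm A (y t)‖ * (‖Tm C‖ * ‖lam t‖) := by
      calc |⟪Tm A (y t), Tm C (lam t)⟫| ≤ ‖Tm A (y t)‖ * ‖Tm C (lam t)‖ :=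
        abs_real_inner_le_norm _ _
      _ ≤ ‖Tm A (y t)‖ * (‖Tm C‖ * ‖lam t‖) :=
        mul_le_mul_of_nonneg_left ((Tm C).le_opNorm _) (norm_nonneg _)
    have hks := key_scalar c₀ σ ‖Tm Aᵀ‖ ‖Tm C‖ ε ⟪lam t, Tm C (lam t)⟫
      ⟪Tm A (y t), Tm C (lam t)⟫ ‖lam t‖ ‖y t‖ ‖Tm A (y t)‖ ‖Tm Aᵀ (lam t)‖
      hσ hε hε1 (norm_nonneg _) (norm_nonneg _) (norm_nonneg _) (norm_nonneg _) hKA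
      (hcoer (lam t)) ((Tm Aᵀ).le_opNorm _) (hlowA (y t)) f5
    have hδV : δ * V t ≤ m * (‖lam t‖ ^ 2 + ‖y t‖ ^ 2) := by
      calc δ * V t ≤ δ * ((3 / 2) * (‖lam t‖ ^ 2 + ‖y t‖ ^ 2)) :=
        mul_le_mul_of_nonneg_left (hVhigh t) hδ.le
      _ = m * (‖lam t‖ ^ 2 + ‖y t‖ ^ 2) := by rw [hδdef]; ring
    rw [hmdef] at hδV
    linarith [hks, hVdt.le, hVdt.ge, hδV]
  -- exponential decay
  set g : ℝ → ℝ := fun t => V t * Real.exp (δ * t) with hgdef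
  have hgder : ∀ t : ℝ, 0 ≤ t →
      HasDerivAt g ((Vd t + δ * V t) * Real.exp (δ * t)) t := by
    intro t ht
    have hexp : HasDerivAt (fun s : ℝ => Real.exp (δ * s)) (Real.exp (δ * t) * δ) t := by
      simpa [mul_comm] using ((hasDerivAt_id t).const_mul δ).exp
    have h := (hVder t ht).mul hexp
    convert h using 1
    case e'_9 => ring
    all_goals rfl
  have hanti : AntitoneOn g (Set.Ici (0 : ℝ)) := by
    apply antitoneOn_of_deriv_nonpos (convex_Ici 0)
    · exact fun t ht => (hgder t ht).continuousAt.continuousWithinAt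
    · intro t ht
      rw [interior_Ici] at ht
      exact (hgder t (le_of_lt ht)).differentiableAt.differentiableWithinAt
    · intro t ht
      rw [interior_Ici] at ht
      rw [(hgder t (le_of_lt ht)).deriv]
      exact mul_nonpos_of_nonpos_of_nonneg (hkey t) (Real.exp_nonneg _)
  have hdecay : ∀ t : ℝ, 0 ≤ t → V t ≤ V 0 * Real.exp (-(δ * t)) := by
    intro t ht
    have h1 : g t ≤ g 0 := hanti Set.self_mem_Ici ht ht
    simp only [hgdef, mul_zero, Real.exp_zero, mul_one] at h1
    have h2 := mul_le_mul_of_nonneg_right h1 (Real.exp_nonneg (-(δ * t)))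
    rwa [mul_assoc, ← Real.exp_add, add_neg_cancel, Real.exp_zero, mul_one] at h2
  -- limits
  have hexp0 : Tendsto (fun t : ℝ => V 0 * Real.exp (-(δ * t))) atTop (nhds 0) := by
    have h1 : Tendsto (fun t : ℝ => δ * t) atTop atTop :=
      Tendsto.const_mul_atTop hδ tendsto_id
    have h2 : Tendsto (fun t : ℝ => Real.exp (-(δ * t))) atTop (nhds 0) :=
      Real.tendsto_exp_neg_atTop_nhds_zero.comp h1
    simpa using h2.const_mul (V 0)
  have hsq : ∀ F : ℝ → EuclideanSpace ℝ (Fin n),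
      (∀ t : ℝ, 0 ≤ t → ‖F t‖ ^ 2 ≤ 2 * (V 0 * Real.exp (-(δ * t)))) →
      Tendsto F atTop (nhds 0) := by
    intro F hF
    have h1 : Tendsto (fun t => ‖F t‖ ^ 2) atTop (nhds 0) := by
      apply squeeze_zero' (Eventually.of_forall fun t => sq_nonneg _)
        ((eventually_ge_atTop (0:ℝ)).mono hF)
      simpa using hexp0.const_mul 2
    have h2 : Tendsto (fun t => ‖F t‖) atTop (nhds 0) := by
      have h3 := (Real.continuous_sqrt.tendsto 0).comp h1
      simp only [Real.sqrt_zero] at h3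
      refine h3.congr fun t => ?_
      simp [Real.sqrt_sq (norm_nonneg (F t))]
    exact tendsto_zero_iff_norm_tendsto_zero.2 h2
  have hbound : ∀ t : ℝ, 0 ≤ t →
      ‖lam t‖ ^ 2 + ‖y t‖ ^ 2 ≤ 2 * (V 0 * Real.exp (-(δ * t))) := by
    intro t ht
    have h1 := hVlow t
    have h2 := hdecay t ht
    set P : ℝ := V 0 * Real.exp (-(δ * t)) with hPdef
    set W : ℝ := V t with hWdef
    clear_value P W
    linarith
  have hlam0 : Tendsto lam atTop (nhds 0) := by
    apply hsq
    intro t ht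
    have h := hbound t ht
    nlinarith [sq_nonneg (‖y t‖)]
  have hy0 : Tendsto y atTop (nhds 0) := by
    apply hsq
    intro t ht
    have h := hbound t ht
    nlinarith [sq_nonneg (‖lam t‖)]
  have hx0 : Tendsto x atTop (nhds 0) := by
    have h1 : Tendsto (fun t => y t + η • lam t) atTop
        (nhds (0 + η • (0 : EuclideanSpace ℝ (Fin n)))) :=
      hy0.add (hlam0.const_smul η)
    simp only [smul_zero, add_zero] at h1
    refine h1.congr fun t => ?_
    simp [hydef]
  exact hlam0.prodMk_nhds hx0
end

section
/- Let A, C ∈ ℝ^{n×n} with A invertible and C symmetric positive definite. For every η ∈ ℝ, all eigenvalues of M(η) = [[-C + ηA, -A], [Aᵀ + η²A - ηC, -ηA]] have strictly negative real part. -/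
open Matrix

/-- The real part of `star x ⬝ᵥ (C.map ofReal) *ᵥ x` equals the sum of two real
quadratic forms of `C` at the real and imaginary parts of `x`. -/
lemma re_quad_eq {n : ℕ} (C : Matrix (Fin n) (Fin n) ℝ) (x : Fin n → ℂ) :
    (star x ⬝ᵥ (C.map (Complex.ofReal : ℝ → ℂ)) *ᵥ x).re =
      ((fun i => (x i).re) ⬝ᵥ C *ᵥ (fun i => (x i).re)) +
      ((fun i => (x i).im) ⬝ᵥ C *ᵥ (fun i => (x i).im)) := by
  simp only [dotProduct, Matrix.mulVec, Matrix.map_apply, Pi.star_apply, Finset.mul_sum,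
    Complex.re_sum, Complex.mul_re, Complex.mul_im, Complex.ofReal_re, Complex.ofReal_im,
    Complex.star_def, Complex.conj_re, Complex.conj_im]
  rw [← Finset.sum_add_distrib]
  refine Finset.sum_congr rfl fun i _ => ?_
  rw [← Finset.sum_add_distrib]
  refine Finset.sum_congr rfl fun j _ => ?_
  ring

lemma posdef_re {n : ℕ} (C : Matrix (Fin n) (Fin n) ℝ) (hC : C.PosDef)
    (x : Fin n → ℂ) (hx : x ≠ 0) :
    0 < (star x ⬝ᵥ (C.map (Complex.ofReal : ℝ → ℂ)) *ᵥ x).re := by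
  rw [re_quad_eq]
  set u : Fin n → ℝ := fun i => (x i).re
  set t : Fin n → ℝ := fun i => (x i).im
  have hut : u ≠ 0 ∨ t ≠ 0 := by
    by_contra h
    push_neg at h
    apply hx
    funext i
    have hu : u i = 0 := by rw [h.1]; rfl
    have ht : t i = 0 := by rw [h.2]; rfl
    exact Complex.ext hu ht
  have hsemi := hC.posSemidef
  rcases hut with h | h
  · have h1 : 0 < u ⬝ᵥ C *ᵥ u := by simpa using hC.dotProduct_mulVec_pos h
    have h2 : 0 ≤ t ⬝ᵥ C *ᵥ t := by simpa using hsemi.dotProduct_mulVec_nonneg t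
    linarith
  · have h1 : 0 ≤ u ⬝ᵥ C *ᵥ u := by simpa using hsemi.dotProduct_mulVec_nonneg u
    have h2 : 0 < t ⬝ᵥ C *ᵥ t := by simpa using hC.dotProduct_mulVec_pos h
    linarith

theorem stmt17 {n : ℕ} (A C : Matrix (Fin n) (Fin n) ℝ) (hA : IsUnit A) (hC : C.PosDef)
    (M : ℝ → Matrix (Fin n ⊕ Fin n) (Fin n ⊕ Fin n) ℝ)
    (hM : ∀ η : ℝ,
      M η = Matrix.fromBlocks (-C + η • A) (-A) (Aᵀ + η ^ 2 • A - η • C) (-(η • A))) :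
    ∀ η : ℝ, ∀ μ : ℂ,
      Module.End.HasEigenvalue (Matrix.toLin' ((M η).map (Complex.ofReal : ℝ → ℂ))) μ →
        μ.re < 0 := by
  intro η μ hev
  set Ac : Matrix (Fin n) (Fin n) ℂ := A.map Complex.ofReal with hAcdef
  set Cc : Matrix (Fin n) (Fin n) ℂ := C.map Complex.ofReal with hCcdef
  -- the complexified matrix as a block matrix
  have hMc : (M η).map (Complex.ofReal : ℝ → ℂ) =
      Matrix.fromBlocks (-Cc + (η:ℂ) • Ac) (-Ac)
        (Acᵀ + ((η:ℂ))^2 • Ac - (η:ℂ) • Cc) (-((η:ℂ) • Ac)) := by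
    rw [hM]
    ext i j
    rcases i with i | i <;> rcases j with j | j <;>
      simp [Matrix.map_apply, Matrix.fromBlocks, Matrix.transpose_apply, hAcdef, hCcdef]
  -- extract an eigenvector
  obtain ⟨v, hv⟩ := hev.exists_hasEigenvector
  have hv0 : v ≠ 0 := hv.right
  have hmv : (M η).map (Complex.ofReal : ℝ → ℂ) *ᵥ v = μ • v := by
    have h := hv.apply_eq_smul
    simpa [Matrix.toLin'_apply] using h
  set x : Fin n → ℂ := v ∘ Sum.inl with hxdef
  set y : Fin n → ℂ := v ∘ Sum.inr with hydef
  have hvelim : v = Sum.elim x y := (Sum.elim_comp_inl_inr v).symm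
  rw [hvelim, hMc, Matrix.fromBlocks_mulVec] at hmv
  have E1 : ∀ i, -((Cc *ᵥ x) i) + (η:ℂ) * (Ac *ᵥ x) i - (Ac *ᵥ y) i = μ * x i := by
    intro i
    have h := congrFun hmv (Sum.inl i)
    simp [Matrix.add_mulVec, Matrix.neg_mulVec, Matrix.smul_mulVec] at h
    linear_combination h
  have E2 : ∀ i, (Acᵀ *ᵥ x) i + (η:ℂ)^2 * (Ac *ᵥ x) i - (η:ℂ) * (Cc *ᵥ x) i
      - (η:ℂ) * (Ac *ᵥ y) i = μ * y i := by
    intro i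
    have h := congrFun hmv (Sum.inr i)
    simp [Matrix.add_mulVec, Matrix.sub_mulVec, Matrix.neg_mulVec,
      Matrix.smul_mulVec] at h
    linear_combination h
  -- the transformed vector
  set z : Fin n → ℂ := fun i => y i - (η:ℂ) * x i with hzdef
  have F1 : Ac *ᵥ z = -(Cc *ᵥ x) - μ • x := by
    funext i
    have hz : z = y - (η:ℂ) • x := by funext j; simp [hzdef]
    rw [hz, Matrix.mulVec_sub, Matrix.mulVec_smul]
    have := E1 i
    simp only [Pi.sub_apply, Pi.neg_apply, Pi.smul_apply, smul_eq_mul]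
    linear_combination (-1 : ℂ) * this
  have F2 : Acᵀ *ᵥ x = μ • z := by
    funext i
    simp only [Pi.smul_apply, smul_eq_mul, hzdef]
    linear_combination E2 i - (η:ℂ) * E1 i
  -- dot product identities
  have ha : star x ⬝ᵥ (Ac *ᵥ z) = -(star x ⬝ᵥ (Cc *ᵥ x)) - μ * (star x ⬝ᵥ x) := by
    rw [F1]
    simp [dotProduct_sub, dotProduct_neg, dotProduct_smul, smul_eq_mul]
  have hb : star z ⬝ᵥ (Acᵀ *ᵥ x) = μ * (star z ⬝ᵥ z) := by
    rw [F2]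
    simp [dotProduct_smul, smul_eq_mul]
  have hconj : star z ⬝ᵥ (Acᵀ *ᵥ x) = (starRingEnd ℂ) (star x ⬝ᵥ (Ac *ᵥ z)) := by
    simp only [dotProduct, Matrix.mulVec, Matrix.transpose_apply, Pi.star_apply,
      map_sum, _root_.map_mul, Finset.mul_sum, hAcdef, Matrix.map_apply, Complex.conj_ofReal,
      Complex.conj_conj, RingHomCompTriple.comp_apply]
    rw [Finset.sum_comm]
    refine Finset.sum_congr rfl fun i _ => Finset.sum_congr rfl fun j _ => by
      simp [Complex.conj_conj]; ring
  -- real quantities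
  set P : ℝ := ∑ i, Complex.normSq (x i) with hPdef
  set Q : ℝ := ∑ i, Complex.normSq (z i) with hQdef
  have hp : star x ⬝ᵥ x = (P : ℂ) := by
    simp [dotProduct, hPdef, Complex.normSq_eq_conj_mul_self]
  have hq : star z ⬝ᵥ z = (Q : ℂ) := by
    simp [dotProduct, hQdef, Complex.normSq_eq_conj_mul_self]
  have hPnn : 0 ≤ P := Finset.sum_nonneg fun i _ => Complex.normSq_nonneg _
  have hQnn : 0 ≤ Q := Finset.sum_nonneg fun i _ => Complex.normSq_nonneg _
  -- case x = 0 is impossible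
  have hx0 : x ≠ 0 := by
    intro hx
    have hz0 : Ac *ᵥ z = 0 := by
      rw [F1, hx]
      simp
    have hAcu : IsUnit Ac := by
      have : Ac = Complex.ofRealHom.mapMatrix A := by
        rw [hAcdef, RingHom.mapMatrix_apply]
        rfl
      rw [this]
      exact hA.map Complex.ofRealHom.mapMatrix
    have hzz : z = 0 := by
      have := Matrix.mulVec_injective_iff_isUnit.mpr hAcu
      have h0 : Ac *ᵥ z = Ac *ᵥ 0 := by simpa using hz0
      exact this h0
    apply hv0
    rw [hvelim]
    funext i
    rcases i with i | i
    · simp [hx]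
    · have h1 : z i = 0 := by rw [hzz]; rfl
      have h2 : x i = 0 := by rw [hx]; rfl
      simp only [Sum.elim_inr]
      have := h1
      rw [hzdef] at this
      simp only [h2, mul_zero, sub_zero] at this
      exact this
  -- positivity
  have hcre : 0 < (star x ⬝ᵥ (Cc *ᵥ x)).re := posdef_re C hC x hx0
  have hPpos : 0 < P := by
    obtain ⟨i, hi⟩ := Function.ne_iff.mp hx0
    exact Finset.sum_pos' (fun j _ => Complex.normSq_nonneg _)
      ⟨i, Finset.mem_univ i, by simpa [Complex.normSq_pos] using hi⟩
  -- combine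
  have heq : (starRingEnd ℂ) (-(star x ⬝ᵥ (Cc *ᵥ x)) - μ * (P:ℂ)) = μ * (Q:ℂ) := by
    rw [← hp, ← hq, ← ha, ← hconj, hb]
  have hre : -(star x ⬝ᵥ (Cc *ᵥ x)).re - μ.re * P = μ.re * Q := by
    have := congrArg Complex.re heq
    simpa [Complex.sub_re, Complex.neg_re, Complex.mul_re] using this
  nlinarith [hcre, hPpos, hQnn, hre]
end
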